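/- With the data of a relational reachability instance (MDP M, m ≥ n ≥ 1, rational q₁,…,q_m, states s₁,…,s_m, surjective index map k, target sets T₁,…,T_m), let v^max = Σ_{c=(s,·)∈Comb} max_{σ∈HR} Σ_{i∈ind(c)} qᵢ · Pr^σ_s(◇Tᵢ). Then for every rational q: (i) there exist schedulers σ₁,…,σₙ ∈ HR with Σ_{i=1}^m qᵢ · Pr^{σ_{k(i)}}_{sᵢ}(◇Tᵢ) ≥ q if and only if v^max ≥ q; and (ii) there exist σ₁,…,σₙ ∈ HR with Σ_{i=1}^m qᵢ · Pr^{σ_{k(i)}}_{sᵢ}(◇Tᵢ) > q if and only if v^max > q. -/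

import Mathlib

open scoped BigOperators Classical
open Filter

/-- A finite history: an initial state together with a list of (action, next-state) steps. -/
abbrev Hist (S A : Type*) : Type _ := S × List (A × S)

/-- The last state of a history. -/
def Hist.last {S A : Type*} (π : Hist S A) : S :=
  (π.2.getLast?).elim π.1 Prod.snd

/-- A Markov decision process with finite state space `S` and finite action space `A`:
`P s a s'` is the transition probability, each state has at least one enabled action
(an action whose outgoing probabilities sum to `1`), and the outgoing probabilities
of a non-enabled action sum to `0`. -/
structure MDP (S A : Type*) [Fintype S] [Fintype A] where
  P : S → A → S → ℝ
  nonneg : ∀ s a s', 0 ≤ P s a s'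
  le_one : ∀ s a s', P s a s' ≤ 1
  sum_cases : ∀ s a, (∑ s', P s a s') = 1 ∨ (∑ s', P s a s') = 0
  exists_enabled : ∀ s, ∃ a, (∑ s', P s a s') = 1

namespace MDP

variable {S A : Type*} [Fintype S] [Fintype A]

/-- Action `a` is enabled in state `s`. -/
def enabled (M : MDP S A) (s : S) (a : A) : Prop := (∑ s', M.P s a s') = 1

/-- A state is absorbing if every enabled action loops on it with probability 1. -/
def Absorbing (M : MDP S A) (s : S) : Prop := ∀ a, M.enabled s a → M.P s a s = 1

end MDP

/-- A (history-dependent, randomized) scheduler for `M`: it assigns to every finite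
history a probability distribution over the actions enabled at its last state. -/
structure Scheduler {S A : Type*} [Fintype S] [Fintype A] (M : MDP S A) where
  choice : Hist S A → A → ℝ
  nonneg : ∀ π a, 0 ≤ choice π a
  sum_one : ∀ π, (∑ a, choice π a) = 1
  supp : ∀ π a, ¬ M.enabled (Hist.last π) a → choice π a = 0

namespace Scheduler

variable {S A : Type*} [Fintype S] [Fintype A] {M : MDP S A}

/-- A scheduler is memoryless if its choice only depends on the last state of the history. -/
def Memoryless (σ : Scheduler M) : Prop :=
  ∀ π π' : Hist S A, Hist.last π = Hist.last π' → σ.choice π = σ.choice π'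

/-- A scheduler is deterministic if all its choice probabilities are 0 or 1. -/
def Deterministic (σ : Scheduler M) : Prop :=
  ∀ π a, σ.choice π a = 0 ∨ σ.choice π a = 1

/-- Memoryless deterministic (MD) schedulers. -/
def MD (σ : Scheduler M) : Prop := σ.Memoryless ∧ σ.Deterministic

end Scheduler

/-- Probability of reaching the target set `T` within `n` steps, starting from history `π`,
under scheduler `σ`. -/
noncomputable def reachN {S A : Type*} [Fintype S] [Fintype A] (M : MDP S A)
    (σ : Scheduler M) (T : Set S) : ℕ → Hist S A → ℝ
  | 0, π => if Hist.last π ∈ T then 1 else 0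
  | n + 1, π =>
      if Hist.last π ∈ T then 1
      else ∑ a, σ.choice π a * ∑ s', M.P (Hist.last π) a s' *
        reachN M σ T n (π.1, π.2 ++ [(a, s')])

/-- `Pr M σ s T` is the probability of eventually reaching `T` from state `s` under
scheduler `σ`: the supremum of the step-bounded reachability probabilities. -/
noncomputable def Pr {S A : Type*} [Fintype S] [Fintype A] (M : MDP S A)
    (σ : Scheduler M) (s : S) (T : Set S) : ℝ :=
  ⨆ n : ℕ, reachN M σ T n (s, [])

/-- The set `Comb` of state-scheduler combinations `(sᵢ, k(i))` of a relational
reachability instance. -/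
noncomputable def combSet {S : Type*} [Fintype S] {m n : ℕ}
    (s : Fin m → S) (k : Fin m → Fin n) : Finset (S × Fin n) :=
  Finset.image (fun i => (s i, k i)) Finset.univ

/-- The contribution `Σ_{i ∈ ind(c)} qᵢ · Pr^σ_{c.1}(◇Tᵢ)` of a state-scheduler
combination `c` under a scheduler `σ`. -/
noncomputable def combVal {S A : Type*} [Fintype S] [Fintype A] {m n : ℕ}
    (M : MDP S A) (q : Fin m → ℚ) (s : Fin m → S) (k : Fin m → Fin n)
    (T : Fin m → Set S) (σ : Scheduler M) (c : S × Fin n) : ℝ :=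
  ∑ i ∈ Finset.univ.filter (fun i => (s i, k i) = c), (q i : ℝ) * Pr M σ c.1 (T i)

/-- `v^min`: the sum over all combinations `c` of the infimum over all schedulers of the
contribution of `c`. -/
noncomputable def vMin {S A : Type*} [Fintype S] [Fintype A] {m n : ℕ}
    (M : MDP S A) (q : Fin m → ℚ) (s : Fin m → S) (k : Fin m → Fin n)
    (T : Fin m → Set S) : ℝ :=
  ∑ c ∈ combSet s k, sInf {x : ℝ | ∃ σ : Scheduler M, x = combVal M q s k T σ c}

/-- `v^max`: the sum over all combinations `c` of the supremum over all schedulers of the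
contribution of `c`. -/
noncomputable def vMax {S A : Type*} [Fintype S] [Fintype A] {m n : ℕ}
    (M : MDP S A) (q : Fin m → ℚ) (s : Fin m → S) (k : Fin m → Fin n)
    (T : Fin m → Set S) : ℝ :=
  ∑ c ∈ combSet s k, sSup {x : ℝ | ∃ σ : Scheduler M, x = combVal M q s k T σ c}

/-- The achievable value set
`A = {Σ_{i} qᵢ · Pr^{σ_{k(i)}}_{sᵢ}(◇Tᵢ) : σ₁,…,σₙ ∈ HR}`. -/
noncomputable def achSet {S A : Type*} [Fintype S] [Fintype A] {m n : ℕ}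
    (M : MDP S A) (q : Fin m → ℚ) (s : Fin m → S) (k : Fin m → Fin n)
    (T : Fin m → Set S) : Set ℝ :=
  {x : ℝ | ∃ σ : Fin n → Scheduler M,
    x = ∑ i, (q i : ℝ) * Pr M (σ (k i)) (s i) (T i)}

section Dev
set_option linter.unusedSectionVars false

open Filter

variable {S A : Type*} [Fintype S] [Fintype A]

lemma MDP.P_eq_zero_of_not_enabled (M : MDP S A) {s : S} {a : A}
    (h : ¬ M.enabled s a) (s' : S) : M.P s a s' = 0 := by
  have hsum : (∑ s', M.P s a s') = 0 := (M.sum_cases s a).resolve_left h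
  exact (Finset.sum_eq_zero_iff_of_nonneg
    (fun s' _ => M.nonneg s a s')).mp hsum s' (Finset.mem_univ _)

/-- Extension of a history by one step. -/
def Hist.ext (π : Hist S A) (a : A) (s' : S) : Hist S A := (π.1, π.2 ++ [(a, s')])

@[simp] lemma Hist.last_ext (π : Hist S A) (a : A) (s' : S) :
    Hist.last (Hist.ext π a s') = s' := by
  simp [Hist.ext, Hist.last, List.getLast?_concat]

@[simp] lemma Hist.ext_fst (π : Hist S A) (a : A) (s' : S) :
    (Hist.ext π a s').1 = π.1 := rfl

@[simp] lemma Hist.last_nil (s : S) : Hist.last ((s, []) : Hist S A) = s := rfl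

/-- The history has visited the set `T`. -/
def hitP (T : Set S) (π : Hist S A) : Prop := π.1 ∈ T ∨ ∃ p ∈ π.2, p.2 ∈ T

lemma hitP_of_last_mem {T : Set S} {π : Hist S A} (h : Hist.last π ∈ T) : hitP T π := by
  unfold Hist.last at h
  rcases hl : π.2.getLast? with _ | p
  · rw [hl] at h; exact Or.inl h
  · rw [hl] at h
    exact Or.inr ⟨p, List.mem_of_getLast? hl, h⟩

lemma hitP_ext {T : Set S} {π : Hist S A} {a : A} {s' : S} :
    hitP T (Hist.ext π a s') ↔ hitP T π ∨ s' ∈ T := by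
  simp only [hitP, Hist.ext, List.mem_append, List.mem_singleton]
  constructor
  · rintro (h | ⟨p, hp | hp, hpT⟩)
    · exact Or.inl (Or.inl h)
    · exact Or.inl (Or.inr ⟨p, hp, hpT⟩)
    · subst hp; exact Or.inr hpT
  · rintro ((h | ⟨p, hp, hpT⟩) | h)
    · exact Or.inl h
    · exact Or.inr ⟨p, Or.inl hp, hpT⟩
    · exact Or.inr ⟨(a, s'), Or.inr rfl, h⟩

@[simp] lemma hitP_nil {T : Set S} {s : S} : hitP T ((s, []) : Hist S A) ↔ s ∈ T := by
  simp [hitP]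

/-- A default scheduler, showing the scheduler type is nonempty. -/
noncomputable def defaultSched (M : MDP S A) : Scheduler M where
  choice := fun π a =>
    if a = Classical.choose (M.exists_enabled (Hist.last π)) then 1 else 0
  nonneg := by intro π a; split <;> norm_num
  sum_one := by intro π; simp
  supp := by
    intro π a h
    rw [if_neg]
    rintro rfl
    exact h (Classical.choose_spec (M.exists_enabled (Hist.last π)))

noncomputable instance (M : MDP S A) : Nonempty (Scheduler M) := ⟨defaultSched M⟩

variable (M : MDP S A)

/-- One-step "expectation" operator on functions of histories. -/
noncomputable def wstep (σ : Scheduler M) (φ : Hist S A → ℝ) (π : Hist S A) : ℝ :=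
  ∑ a, σ.choice π a * ∑ s', M.P (Hist.last π) a s' * φ (Hist.ext π a s')

/-- `wsum M σ φ t π` is the expected value of `φ` of the history `t` steps after `π`. -/
noncomputable def wsum (σ : Scheduler M) (φ : Hist S A → ℝ) : ℕ → Hist S A → ℝ
  | 0 => φ
  | (t+1) => wstep M σ (wsum σ φ t)

@[simp] lemma wsum_zero (σ : Scheduler M) (φ : Hist S A → ℝ) : wsum M σ φ 0 = φ := rfl

lemma wsum_succ (σ : Scheduler M) (φ : Hist S A → ℝ) (t : ℕ) :
    wsum M σ φ (t+1) = wstep M σ (wsum M σ φ t) := rfl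

lemma wstep_congr (σ : Scheduler M) {φ ψ : Hist S A → ℝ} (π : Hist S A)
    (h : ∀ a s', φ (Hist.ext π a s') = ψ (Hist.ext π a s')) :
    wstep M σ φ π = wstep M σ ψ π := by
  unfold wstep
  exact Finset.sum_congr rfl fun a _ => by
    rw [Finset.sum_congr rfl fun s' _ => by rw [h a s']]

lemma wstep_const (σ : Scheduler M) (c : ℝ) (π : Hist S A) :
    wstep M σ (fun _ => c) π = c := by
  unfold wstep
  have : ∀ a : A, σ.choice π a * ∑ s', M.P (Hist.last π) a s' * c = σ.choice π a * c := by
    intro a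
    by_cases h : M.enabled (Hist.last π) a
    · rw [← Finset.sum_mul, h, one_mul]
    · rw [σ.supp π a h, zero_mul, zero_mul]
  rw [Finset.sum_congr rfl fun a _ => this a, ← Finset.sum_mul, σ.sum_one, one_mul]

lemma wstep_mono (σ : Scheduler M) {φ ψ : Hist S A → ℝ} (h : ∀ π, φ π ≤ ψ π)
    (π : Hist S A) : wstep M σ φ π ≤ wstep M σ ψ π := by
  unfold wstep
  refine Finset.sum_le_sum fun a _ => ?_
  refine mul_le_mul_of_nonneg_left ?_ (σ.nonneg π a)
  exact Finset.sum_le_sum fun s' _ =>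
    mul_le_mul_of_nonneg_left (h _) (M.nonneg _ a s')

lemma wstep_nonneg (σ : Scheduler M) {φ : Hist S A → ℝ} (h : ∀ π, 0 ≤ φ π)
    (π : Hist S A) : 0 ≤ wstep M σ φ π := by
  have := wstep_mono M σ h π
  rwa [wstep_const] at this

lemma wsum_mono (σ : Scheduler M) {φ ψ : Hist S A → ℝ} (h : ∀ π, φ π ≤ ψ π) :
    ∀ t π, wsum M σ φ t π ≤ wsum M σ ψ t π := by
  intro t
  induction t with
  | zero => exact h
  | succ t ih => exact fun π => wstep_mono M σ ih π

lemma wsum_const (σ : Scheduler M) (c : ℝ) : ∀ t π, wsum M σ (fun _ => c) t π = c := by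
  intro t
  induction t with
  | zero => exact fun _ => rfl
  | succ t ih =>
    intro π
    rw [wsum_succ, wstep_congr M σ (ψ := fun _ => c) π (fun a s' => ih _), wstep_const]

lemma wsum_succ' (σ : Scheduler M) (φ : Hist S A → ℝ) :
    ∀ t, wsum M σ φ (t+1) = wsum M σ (wstep M σ φ) t := by
  intro t
  induction t with
  | zero => rfl
  | succ t ih => rw [wsum_succ, ih, ← wsum_succ]

end Dev
section Dev2
set_option linter.unusedSectionVars false

open Filter

variable {S A : Type*} [Fintype S] [Fintype A] (M : MDP S A)

/-- Indicator function of having visited `T`. -/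
noncomputable def hitInd (T : Set S) (π : Hist S A) : ℝ := if hitP T π then 1 else 0

lemma hitInd_nonneg (T : Set S) (π : Hist S A) : 0 ≤ hitInd T π := by
  unfold hitInd; split <;> norm_num

lemma hitInd_le_one (T : Set S) (π : Hist S A) : hitInd T π ≤ 1 := by
  unfold hitInd; split <;> norm_num

lemma wsum_hitInd_of_hit (σ : Scheduler M) (T : Set S) :
    ∀ t (π : Hist S A), hitP T π → wsum M σ (hitInd T) t π = 1 := by
  intro t
  induction t with
  | zero => intro π h; exact if_pos h
  | succ t ih =>
    intro π h
    rw [wsum_succ, wstep_congr M σ (ψ := fun _ => 1) π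
      (fun a s' => ih _ (hitP_ext.2 (Or.inl h))), wstep_const]

lemma hitInd_le_wstep (σ : Scheduler M) (T : Set S) (π : Hist S A) :
    hitInd T π ≤ wstep M σ (hitInd T) π := by
  by_cases h : hitP T π
  · rw [wstep_congr M σ (ψ := fun _ => 1) π
      (fun a s' => if_pos (hitP_ext.2 (Or.inl h))), wstep_const, hitInd, if_pos h]
  · rw [hitInd, if_neg h]
    exact wstep_nonneg M σ (hitInd_nonneg T) π

lemma wsum_hitInd_mono (σ : Scheduler M) (T : Set S) (π : Hist S A) :
    Monotone (fun t => wsum M σ (hitInd T) t π) := by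
  refine monotone_nat_of_le_succ fun t => ?_
  rw [wsum_succ' M σ _ t]
  exact wsum_mono M σ (fun π' => hitInd_le_wstep M σ T π') t π

lemma wsum_hitInd_nonneg (σ : Scheduler M) (T : Set S) (t : ℕ) (π : Hist S A) :
    0 ≤ wsum M σ (hitInd T) t π := by
  have := wsum_mono M σ (φ := fun _ => 0) (ψ := hitInd T) (hitInd_nonneg T) t π
  rwa [wsum_const] at this

lemma wsum_hitInd_le_one (σ : Scheduler M) (T : Set S) (t : ℕ) (π : Hist S A) :
    wsum M σ (hitInd T) t π ≤ 1 := by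
  have := wsum_mono M σ (φ := hitInd T) (ψ := fun _ => 1) (hitInd_le_one T) t π
  rwa [wsum_const] at this

lemma reachN_of_last_mem (σ : Scheduler M) {T : Set S} (t : ℕ) {π : Hist S A}
    (h : Hist.last π ∈ T) : reachN M σ T t π = 1 := by
  cases t <;> simp [reachN, h]

lemma reachN_eq_wsum (σ : Scheduler M) (T : Set S) :
    ∀ t (π : Hist S A), ¬ hitP T π →
      reachN M σ T t π = wsum M σ (hitInd T) t π := by
  intro t
  induction t with
  | zero =>
    intro π h
    have hl : Hist.last π ∉ T := fun hm => h (hitP_of_last_mem hm)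
    simp [reachN, hitInd, if_neg h, if_neg hl]
  | succ t ih =>
    intro π h
    have hl : Hist.last π ∉ T := fun hm => h (hitP_of_last_mem hm)
    rw [wsum_succ]
    show (if Hist.last π ∈ T then (1:ℝ) else _) = _
    rw [if_neg hl]
    unfold wstep
    refine Finset.sum_congr rfl fun a _ => ?_
    refine congrArg _ (Finset.sum_congr rfl fun s' _ => congrArg _ ?_)
    by_cases he : hitP T (Hist.ext π a s')
    · have hs' : s' ∈ T := by
        rcases hitP_ext.1 he with h' | h'
        · exact absurd h' h
        · exact h'
      show reachN M σ T t (Hist.ext π a s') = _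
      rw [reachN_of_last_mem M σ t (by rwa [Hist.last_ext]),
        wsum_hitInd_of_hit M σ T t _ he]
    · exact ih _ he

lemma reachN_init (σ : Scheduler M) (T : Set S) (t : ℕ) (s0 : S) :
    reachN M σ T t (s0, []) = wsum M σ (hitInd T) t (s0, []) := by
  by_cases h : s0 ∈ T
  · rw [reachN_of_last_mem M σ t (by rwa [Hist.last_nil]),
      wsum_hitInd_of_hit M σ T t _ (hitP_nil.2 h)]
  · exact reachN_eq_wsum M σ T t _ (fun hh => h (hitP_nil.1 hh))

lemma Pr_tendsto (σ : Scheduler M) (s0 : S) (T : Set S) :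
    Tendsto (fun t => wsum M σ (hitInd T) t (s0, []))
      atTop (nhds (Pr M σ s0 T)) := by
  have he : Pr M σ s0 T = ⨆ t, wsum M σ (hitInd T) t ((s0, []) : Hist S A) := by
    unfold Pr
    exact iSup_congr fun t => reachN_init M σ T t s0
  rw [he]
  exact tendsto_atTop_ciSup (wsum_hitInd_mono M σ T _)
    ⟨1, by rintro x ⟨t, rfl⟩; exact wsum_hitInd_le_one M σ T t _⟩

lemma Pr_nonneg (σ : Scheduler M) (s0 : S) (T : Set S) : 0 ≤ Pr M σ s0 T :=
  le_of_tendsto_of_tendsto' tendsto_const_nhds (Pr_tendsto M σ s0 T)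
    (fun t => wsum_hitInd_nonneg M σ T t _)

lemma Pr_le_one (σ : Scheduler M) (s0 : S) (T : Set S) : Pr M σ s0 T ≤ 1 :=
  le_of_tendsto_of_tendsto' (Pr_tendsto M σ s0 T) tendsto_const_nhds
    (fun t => wsum_hitInd_le_one M σ T t _)

lemma reachN_congr {σ σ' : Scheduler M} (T : Set S) {x : S}
    (h : ∀ π' : Hist S A, π'.1 = x → σ.choice π' = σ'.choice π') :
    ∀ t (π : Hist S A), π.1 = x → reachN M σ T t π = reachN M σ' T t π := by
  intro t
  induction t with
  | zero => intro π _; rfl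
  | succ t ih =>
    intro π hπ
    show (if _ then (1:ℝ) else _) = (if _ then (1:ℝ) else _)
    rw [h π hπ]
    refine if_congr Iff.rfl rfl (Finset.sum_congr rfl fun a _ => congrArg _ ?_)
    exact Finset.sum_congr rfl fun s' _ => congrArg _ (ih _ hπ)

lemma Pr_congr {σ σ' : Scheduler M} {x : S} (T : Set S)
    (h : ∀ π' : Hist S A, π'.1 = x → σ.choice π' = σ'.choice π') :
    Pr M σ x T = Pr M σ' x T := by
  unfold Pr
  exact iSup_congr fun t => reachN_congr M T h t _ rfl

lemma wstep_add (σ : Scheduler M) (φ ψ : Hist S A → ℝ) (π : Hist S A) :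
    wstep M σ (fun e => φ e + ψ e) π = wstep M σ φ π + wstep M σ ψ π := by
  unfold wstep
  rw [← Finset.sum_add_distrib]
  refine Finset.sum_congr rfl fun a _ => ?_
  rw [← mul_add, ← Finset.sum_add_distrib]
  refine congrArg _ (Finset.sum_congr rfl fun s' _ => ?_)
  ring

lemma wstep_sub (σ : Scheduler M) (φ ψ : Hist S A → ℝ) (π : Hist S A) :
    wstep M σ (fun e => φ e - ψ e) π = wstep M σ φ π - wstep M σ ψ π := by
  unfold wstep
  rw [← Finset.sum_sub_distrib]
  refine Finset.sum_congr rfl fun a _ => ?_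
  rw [← mul_sub, ← Finset.sum_sub_distrib]
  refine congrArg _ (Finset.sum_congr rfl fun s' _ => ?_)
  ring

lemma wstep_const_mul (σ : Scheduler M) (c : ℝ) (φ : Hist S A → ℝ) (π : Hist S A) :
    wstep M σ (fun e => c * φ e) π = c * wstep M σ φ π := by
  unfold wstep
  have h1 : ∀ a : A, ∑ s', M.P (Hist.last π) a s' * (fun e => c * φ e) (Hist.ext π a s')
      = c * ∑ s', M.P (Hist.last π) a s' * φ (Hist.ext π a s') := by
    intro a
    rw [Finset.mul_sum]
    exact Finset.sum_congr rfl fun s' _ => by dsimp only; ring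
  rw [Finset.mul_sum]
  refine Finset.sum_congr rfl fun a _ => ?_
  rw [h1 a]
  ring

lemma wstep_lin {ι : Type*} (σ : Scheduler M) (I : Finset ι) (c : ι → ℝ)
    (ψ : ι → Hist S A → ℝ) (π : Hist S A) :
    wstep M σ (fun e => ∑ i ∈ I, c i * ψ i e) π = ∑ i ∈ I, c i * wstep M σ (ψ i) π := by
  induction I using Finset.induction with
  | empty => simpa using wstep_const M σ 0 π
  | @insert j s hnot ih =>
    have h : (fun e => ∑ i ∈ insert j s, c i * ψ i e)
        = fun e => (fun e' => c j * ψ j e') e + (fun e' => ∑ i ∈ s, c i * ψ i e') e := by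
      funext e; rw [Finset.sum_insert hnot]
    rw [h, wstep_add, wstep_const_mul, ih, Finset.sum_insert hnot]

lemma wsum_lin {ι : Type*} (σ : Scheduler M) (I : Finset ι) (c : ι → ℝ)
    (φ : ι → Hist S A → ℝ) :
    ∀ t π, wsum M σ (fun e => ∑ i ∈ I, c i * φ i e) t π
      = ∑ i ∈ I, c i * wsum M σ (φ i) t π := by
  intro t
  induction t with
  | zero => intro π; rfl
  | succ t ih =>
    intro π
    rw [wsum_succ, wstep_congr M σ (ψ := fun e => ∑ i ∈ I, c i * wsum M σ (φ i) t e) π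
      (fun a s' => ih _), wstep_lin]
    rfl

end Dev2
section Dev3
set_option linter.unusedSectionVars false

open Filter

variable {S A : Type*} [Fintype S] [Fintype A] (M : MDP S A)
variable {m : ℕ} (q : Fin m → ℝ) (T : Fin m → Set S) (I : Finset (Fin m))

/-- Update of the memory recording which targets have been hit. -/
noncomputable def updB (B : Finset (Fin m)) (s' : S) : Finset (Fin m) :=
  B ∪ I.filter (fun i => s' ∈ T i)

/-- Which targets (within `I`) the history has hit. -/
noncomputable def Bof (π : Hist S A) : Finset (Fin m) :=
  I.filter (fun i => hitP (T i) π)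

/-- Total weight of a memory state. -/
noncomputable def gB (B : Finset (Fin m)) : ℝ := ∑ i ∈ B, q i

/-- Weighted indicator sum of the targets hit by a history. -/
noncomputable def gI (π : Hist S A) : ℝ := ∑ i ∈ I, q i * hitInd (T i) π

lemma gI_eq_gB (π : Hist S A) : gI q T I π = gB q (Bof T I π) := by
  unfold gI gB Bof
  rw [Finset.sum_filter]
  exact Finset.sum_congr rfl fun i _ => by unfold hitInd; split <;> simp

lemma Bof_ext (π : Hist S A) (a : A) (s' : S) :
    Bof T I (Hist.ext π a s') = updB T I (Bof T I π) s' := by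
  ext i
  simp only [Bof, updB, Finset.mem_filter, Finset.mem_union, hitP_ext]
  tauto

variable (γ : ℝ)

/-- One-step value of action `a` at product state `u`, with continuation values `W`. -/
noncomputable def Qval (W : S × Finset (Fin m) → ℝ) (u : S × Finset (Fin m)) (a : A) : ℝ :=
  ∑ s', M.P u.1 a s' *
    ((gB q (updB T I u.2 s') - gB q u.2) + γ * W (s', updB T I u.2 s'))

/-- Enabled actions at a state, as a finset. -/
noncomputable def EnA (s : S) : Finset A := Finset.univ.filter (fun a => M.enabled s a)

lemma EnA_nonempty (s : S) : (EnA M s).Nonempty := by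
  obtain ⟨a, ha⟩ := M.exists_enabled s
  exact ⟨a, by simp only [EnA, Finset.mem_filter, Finset.mem_univ, true_and]; exact ha⟩

lemma mem_EnA {s : S} {a : A} : a ∈ EnA M s ↔ M.enabled s a := by simp [EnA]

/-- Bellman operator for the discounted product MDP. -/
noncomputable def Lop (W : S × Finset (Fin m) → ℝ) (u : S × Finset (Fin m)) : ℝ :=
  (EnA M u.1).sup' (EnA_nonempty M u.1) (Qval M q T I γ W u)

lemma P_sum_le_one (s : S) (a : A) : (∑ s', M.P s a s') ≤ 1 := by
  rcases M.sum_cases s a with h | h <;> simp [h]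

lemma abs_sup'_sub_sup'_le {α : Type*} {s : Finset α} (h : s.Nonempty) (f g : α → ℝ)
    {c : ℝ} (hc : ∀ a ∈ s, |f a - g a| ≤ c) : |s.sup' h f - s.sup' h g| ≤ c := by
  rw [abs_sub_le_iff]
  constructor
  · rw [sub_le_iff_le_add]
    refine Finset.sup'_le h f fun a ha => ?_
    have h1 : f a - g a ≤ c := (abs_sub_le_iff.1 (hc a ha)).1
    have h2 : g a ≤ s.sup' h g := Finset.le_sup' g ha
    linarith
  · rw [sub_le_iff_le_add]
    refine Finset.sup'_le h g fun a ha => ?_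
    have h1 : g a - f a ≤ c := (abs_sub_le_iff.1 (hc a ha)).2
    have h2 : f a ≤ s.sup' h f := Finset.le_sup' f ha
    linarith

lemma Qval_dist (hγ0 : 0 ≤ γ) (W1 W2 : S × Finset (Fin m) → ℝ)
    (u : S × Finset (Fin m)) (a : A) :
    |Qval M q T I γ W1 u a - Qval M q T I γ W2 u a| ≤ γ * dist W1 W2 := by
  unfold Qval
  rw [← Finset.sum_sub_distrib]
  have h1 : ∀ s' : S, M.P u.1 a s' *
        ((gB q (updB T I u.2 s') - gB q u.2) + γ * W1 (s', updB T I u.2 s'))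
      - M.P u.1 a s' *
        ((gB q (updB T I u.2 s') - gB q u.2) + γ * W2 (s', updB T I u.2 s'))
      = M.P u.1 a s' * (γ * (W1 (s', updB T I u.2 s') - W2 (s', updB T I u.2 s'))) := by
    intro s'; ring
  rw [Finset.sum_congr rfl fun s' _ => h1 s']
  refine le_trans (Finset.abs_sum_le_sum_abs _ _) ?_
  have h2 : ∀ s' : S, |M.P u.1 a s' *
      (γ * (W1 (s', updB T I u.2 s') - W2 (s', updB T I u.2 s')))|
      ≤ M.P u.1 a s' * (γ * dist W1 W2) := by
    intro s'
    rw [abs_mul, abs_of_nonneg (M.nonneg _ _ _), abs_mul, abs_of_nonneg hγ0]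
    refine mul_le_mul_of_nonneg_left (mul_le_mul_of_nonneg_left ?_ hγ0) (M.nonneg _ _ _)
    rw [← Real.dist_eq]
    exact dist_le_pi_dist W1 W2 _
  refine le_trans (Finset.sum_le_sum fun s' _ => h2 s') ?_
  rw [← Finset.sum_mul]
  calc (∑ s', M.P u.1 a s') * (γ * dist W1 W2)
      ≤ 1 * (γ * dist W1 W2) := by
        refine mul_le_mul_of_nonneg_right (P_sum_le_one M u.1 a) ?_
        exact mul_nonneg hγ0 dist_nonneg
    _ = γ * dist W1 W2 := one_mul _

lemma Lop_dist (hγ0 : 0 ≤ γ) (W1 W2 : S × Finset (Fin m) → ℝ) :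
    dist (Lop M q T I γ W1) (Lop M q T I γ W2) ≤ γ * dist W1 W2 := by
  rw [dist_pi_le_iff (mul_nonneg hγ0 dist_nonneg)]
  intro u
  rw [Real.dist_eq]
  exact abs_sup'_sub_sup'_le _ _ _ fun a _ => Qval_dist M q T I γ hγ0 W1 W2 u a

lemma Lop_contracting (hγ0 : 0 ≤ γ) (hγ1 : γ < 1) :
    ContractingWith γ.toNNReal (Lop M q T I γ) := by
  refine ⟨by rwa [Real.toNNReal_lt_one], LipschitzWith.of_dist_le_mul fun W1 W2 => ?_⟩
  rw [Real.coe_toNNReal γ hγ0]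
  exact Lop_dist M q T I γ hγ0 W1 W2

/-- The discounted optimal value function, via the Banach fixed point theorem. -/
noncomputable def Wfix (hγ0 : 0 ≤ γ) (hγ1 : γ < 1) : S × Finset (Fin m) → ℝ :=
  ContractingWith.fixedPoint (Lop M q T I γ) (Lop_contracting M q T I γ hγ0 hγ1)

lemma Wfix_fixed (hγ0 : 0 ≤ γ) (hγ1 : γ < 1) :
    Lop M q T I γ (Wfix M q T I γ hγ0 hγ1) = Wfix M q T I γ hγ0 hγ1 :=
  ContractingWith.fixedPoint_isFixedPt (Lop_contracting M q T I γ hγ0 hγ1)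

lemma exists_greedy (hγ0 : 0 ≤ γ) (hγ1 : γ < 1) :
    ∃ f : S × Finset (Fin m) → A, ∀ u, M.enabled u.1 (f u) ∧
      Qval M q T I γ (Wfix M q T I γ hγ0 hγ1) u (f u) = Wfix M q T I γ hγ0 hγ1 u := by
  have h : ∀ u : S × Finset (Fin m), ∃ a : A, M.enabled u.1 a ∧
      Qval M q T I γ (Wfix M q T I γ hγ0 hγ1) u a = Wfix M q T I γ hγ0 hγ1 u := by
    intro u
    obtain ⟨a, ha, haeq⟩ := Finset.exists_mem_eq_sup' (EnA_nonempty M u.1)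
      (Qval M q T I γ (Wfix M q T I γ hγ0 hγ1) u)
    refine ⟨a, mem_EnA M |>.1 ha, ?_⟩
    have := Wfix_fixed M q T I γ hγ0 hγ1
    rw [← congrFun this u]
    exact haeq.symm
  choose f hf using h
  exact ⟨f, hf⟩

end Dev3
section Dev4
set_option linter.unusedSectionVars false

open Filter

variable {S A : Type*} [Fintype S] [Fintype A] (M : MDP S A)
variable {m : ℕ} (q : Fin m → ℝ) (T : Fin m → Set S) (I : Finset (Fin m)) (γ : ℝ)

/-- `t`-step discounted accumulated-reward value of scheduler `σ` from history `π`. -/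
noncomputable def Ddisc (σ : Scheduler M) : ℕ → Hist S A → ℝ
  | 0 => fun _ => 0
  | (t+1) => fun π => wstep M σ
      (fun e => (gI q T I e - gI q T I π) + γ * Ddisc σ t e) π

lemma Ddisc_succ (σ : Scheduler M) (t : ℕ) (π : Hist S A) :
    Ddisc M q T I γ σ (t+1) π
      = wstep M σ (fun e => (gI q T I e - gI q T I π) + γ * Ddisc M q T I γ σ t e) π := rfl

/-- K3: the discounted `t`-step value is the discounted sum of the one-step increments
of the expected weighted hitting indicators. -/
lemma Ddisc_eq (σ : Scheduler M) : ∀ (t : ℕ) (π : Hist S A),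
    Ddisc M q T I γ σ t π = ∑ u ∈ Finset.range t,
      γ^u * (wsum M σ (gI q T I) (u+1) π - wsum M σ (gI q T I) u π) := by
  intro t
  induction t with
  | zero => intro π; simp [Ddisc]
  | succ t ih =>
    intro π
    rw [Ddisc_succ,
      wstep_congr M σ (ψ := fun e => (gI q T I e - gI q T I π) + γ *
        ∑ u ∈ Finset.range t,
          γ^u * (wsum M σ (gI q T I) (u+1) e - wsum M σ (gI q T I) u e)) π
        (fun a s' => by rw [ih])]
    have hsplit : (fun e => (gI q T I e - gI q T I π) + γ *
          ∑ u ∈ Finset.range t,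
            γ^u * (wsum M σ (gI q T I) (u+1) e - wsum M σ (gI q T I) u e))
        = fun e => ((fun e' => gI q T I e' - (fun _ => gI q T I π) e') e)
          + ((fun e' => γ * ((fun e'' => ∑ u ∈ Finset.range t,
              γ^u * ((fun e3 => wsum M σ (gI q T I) (u+1) e3 - wsum M σ (gI q T I) u e3) e'')) e')) e) := by
      funext e; rfl
    rw [hsplit, wstep_add, wstep_sub, wstep_const, wstep_const_mul,
      wstep_lin M σ (Finset.range t) (fun u => γ^u)
        (fun u e => wsum M σ (gI q T I) (u+1) e - wsum M σ (gI q T I) u e) π]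
    have hsub : ∀ u, wstep M σ
        (fun e => wsum M σ (gI q T I) (u+1) e - wsum M σ (gI q T I) u e) π
        = wsum M σ (gI q T I) (u+2) π - wsum M σ (gI q T I) (u+1) π := by
      intro u
      rw [wstep_sub M σ (wsum M σ (gI q T I) (u+1)) (wsum M σ (gI q T I) u) π]
      rfl
    rw [Finset.sum_congr rfl fun u _ => by rw [hsub u]]
    rw [Finset.sum_range_succ' (fun u =>
      γ^u * (wsum M σ (gI q T I) (u+1) π - wsum M σ (gI q T I) u π)) t]
    have h0 : wstep M σ (gI q T I) π = wsum M σ (gI q T I) 1 π := rfl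
    rw [h0, Finset.mul_sum]
    have hterm : ∀ u ∈ Finset.range t,
        γ * (γ^u * (wsum M σ (gI q T I) (u+2) π - wsum M σ (gI q T I) (u+1) π))
        = γ^(u+1) * (wsum M σ (gI q T I) (u+1+1) π - wsum M σ (gI q T I) (u+1) π) :=
      fun u _ => by ring
    rw [Finset.sum_congr rfl hterm]
    simp only [pow_zero, one_mul, wsum_zero]
    ring

/-- The memoryless-in-product-state scheduler induced by `f`, with a default fallback
where `f` is not enabled. -/
noncomputable def schedOf (f : S × Finset (Fin m) → A) : Scheduler M where
  choice := fun π a =>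
    if M.enabled (Hist.last π) (f (Hist.last π, Bof T I π)) then
      (if a = f (Hist.last π, Bof T I π) then 1 else 0)
    else (defaultSched M).choice π a
  nonneg := by
    intro π a; split
    · split <;> norm_num
    · exact (defaultSched M).nonneg π a
  sum_one := by
    intro π; split
    · simp
    · exact (defaultSched M).sum_one π
  supp := by
    intro π a h; split_ifs with hen hfa
    · rw [hfa] at h; exact absurd hen h
    · rfl
    · exact (defaultSched M).supp π a h

lemma schedOf_choice (f : S × Finset (Fin m) → A)
    (hf : ∀ u, M.enabled u.1 (f u)) (π : Hist S A) (a : A) :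
    (schedOf M T I f).choice π a
      = if a = f (Hist.last π, Bof T I π) then 1 else 0 := by
  show (if M.enabled (Hist.last π) (f (Hist.last π, Bof T I π)) then _ else _) = _
  rw [if_pos (hf (Hist.last π, Bof T I π))]

lemma wstep_schedOf (f : S × Finset (Fin m) → A)
    (hf : ∀ u, M.enabled u.1 (f u)) (φ : Hist S A → ℝ) (π : Hist S A) :
    wstep M (schedOf M T I f) φ π
      = ∑ s', M.P (Hist.last π) (f (Hist.last π, Bof T I π)) s'
          * φ (Hist.ext π (f (Hist.last π, Bof T I π)) s') := by
  unfold wstep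
  rw [Finset.sum_congr rfl fun a _ => by rw [schedOf_choice M T I f hf π a]]
  rw [Finset.sum_congr rfl fun a _ => (ite_mul _ _ _ _ : _ = _)]
  simp only [one_mul, zero_mul]
  rw [Finset.sum_ite_eq' Finset.univ (f (Hist.last π, Bof T I π))]
  rw [if_pos (Finset.mem_univ _)]

/-- K1: upper Bellman bound for an arbitrary scheduler. -/
lemma Ddisc_le (hγ0 : 0 ≤ γ) (W : S × Finset (Fin m) → ℝ)
    (hW : Lop M q T I γ W = W) (C : ℝ) (hC : ∀ u, |W u| ≤ C) (σ : Scheduler M) :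
    ∀ (t : ℕ) (π : Hist S A),
      Ddisc M q T I γ σ t π ≤ W (Hist.last π, Bof T I π) + γ^t * C := by
  intro t
  induction t with
  | zero =>
    intro π
    have := abs_le.1 (hC (Hist.last π, Bof T I π))
    show (0:ℝ) ≤ _
    rw [pow_zero, one_mul]
    linarith [this.1]
  | succ t ih =>
    intro π
    rw [Ddisc_succ]
    have hmono : ∀ e : Hist S A,
        (gI q T I e - gI q T I π) + γ * Ddisc M q T I γ σ t e
        ≤ (gI q T I e - gI q T I π)
          + γ * (W (Hist.last e, Bof T I e) + γ^t * C) :=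
      fun e => add_le_add le_rfl (mul_le_mul_of_nonneg_left (ih e) hγ0)
    refine le_trans (wstep_mono M σ hmono π) ?_
    set u : S × Finset (Fin m) := (Hist.last π, Bof T I π) with hu
    have hinner : ∀ a, M.enabled (Hist.last π) a →
        (∑ s', M.P (Hist.last π) a s' *
          ((gI q T I (Hist.ext π a s') - gI q T I π)
            + γ * (W (Hist.last (Hist.ext π a s'), Bof T I (Hist.ext π a s')) + γ^t * C)))
        ≤ W u + γ^(t+1) * C := by
      intro a ha
      have hrw : ∀ s' : S,
          (gI q T I (Hist.ext π a s') - gI q T I π)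
            + γ * (W (Hist.last (Hist.ext π a s'), Bof T I (Hist.ext π a s')) + γ^t * C)
          = ((gB q (updB T I u.2 s') - gB q u.2) + γ * W (s', updB T I u.2 s'))
            + γ^(t+1) * C := by
        intro s'
        rw [gI_eq_gB, Bof_ext, Hist.last_ext, gI_eq_gB]
        show _ = ((gB q (updB T I (Bof T I π) s') - gB q (Bof T I π)) + _) + _
        ring
      rw [Finset.sum_congr rfl fun s' _ => by rw [hrw s']]
      have hsplit : (∑ s', M.P (Hist.last π) a s' *
            (((gB q (updB T I u.2 s') - gB q u.2) + γ * W (s', updB T I u.2 s'))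
              + γ^(t+1) * C))
          = Qval M q T I γ W u a + (∑ s', M.P (Hist.last π) a s') * (γ^(t+1) * C) := by
        unfold Qval
        rw [Finset.sum_mul, ← Finset.sum_add_distrib]
        exact Finset.sum_congr rfl fun s' _ => by ring
      rw [hsplit, ha, one_mul]
      have hQ : Qval M q T I γ W u a ≤ Lop M q T I γ W u :=
        Finset.le_sup' (Qval M q T I γ W u) ((mem_EnA M).2 ha)
      rw [hW] at hQ
      linarith
    calc wstep M σ _ π
        ≤ ∑ a, σ.choice π a * (W u + γ^(t+1) * C) := by
          unfold wstep
          refine Finset.sum_le_sum fun a _ => ?_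
          by_cases ha : M.enabled (Hist.last π) a
          · exact mul_le_mul_of_nonneg_left (hinner a ha) (σ.nonneg π a)
          · rw [σ.supp π a ha, zero_mul, zero_mul]
      _ = W u + γ^(t+1) * C := by rw [← Finset.sum_mul, σ.sum_one, one_mul]

/-- K2: lower Bellman bound for the greedy scheduler. -/
lemma le_Ddisc_greedy (hγ0 : 0 ≤ γ) (W : S × Finset (Fin m) → ℝ)
    (C : ℝ) (hC : ∀ u, |W u| ≤ C) (f : S × Finset (Fin m) → A)
    (hf : ∀ u, M.enabled u.1 (f u) ∧ Qval M q T I γ W u (f u) = W u) :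
    ∀ (t : ℕ) (π : Hist S A),
      W (Hist.last π, Bof T I π) - γ^t * C ≤ Ddisc M q T I γ (schedOf M T I f) t π := by
  have hfe : ∀ u, M.enabled u.1 (f u) := fun u => (hf u).1
  intro t
  induction t with
  | zero =>
    intro π
    have := abs_le.1 (hC (Hist.last π, Bof T I π))
    show _ ≤ (0:ℝ)
    rw [pow_zero, one_mul]
    linarith [this.2]
  | succ t ih =>
    intro π
    rw [Ddisc_succ]
    have hmono : ∀ e : Hist S A,
        (gI q T I e - gI q T I π)
          + γ * (W (Hist.last e, Bof T I e) - γ^t * C)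
        ≤ (gI q T I e - gI q T I π) + γ * Ddisc M q T I γ (schedOf M T I f) t e :=
      fun e => add_le_add le_rfl (mul_le_mul_of_nonneg_left (ih e) hγ0)
    refine le_trans ?_ (wstep_mono M (schedOf M T I f) hmono π)
    set u : S × Finset (Fin m) := (Hist.last π, Bof T I π) with hu
    rw [wstep_schedOf M T I f hfe]
    have hrw : ∀ s' : S,
        (gI q T I (Hist.ext π (f u) s') - gI q T I π)
          + γ * (W (Hist.last (Hist.ext π (f u) s'), Bof T I (Hist.ext π (f u) s')) - γ^t * C)
        = ((gB q (updB T I u.2 s') - gB q u.2) + γ * W (s', updB T I u.2 s'))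
          - γ^(t+1) * C := by
      intro s'
      rw [gI_eq_gB, Bof_ext, Hist.last_ext, gI_eq_gB]
      show _ = ((gB q (updB T I (Bof T I π) s') - gB q (Bof T I π)) + _) - _
      ring
    rw [Finset.sum_congr rfl fun s' _ => by rw [hrw s']]
    have hsplit : (∑ s', M.P (Hist.last π) (f u) s' *
          (((gB q (updB T I u.2 s') - gB q u.2) + γ * W (s', updB T I u.2 s'))
            - γ^(t+1) * C))
        = Qval M q T I γ W u (f u)
          - (∑ s', M.P (Hist.last π) (f u) s') * (γ^(t+1) * C) := by
      unfold Qval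
      rw [Finset.sum_mul, ← Finset.sum_sub_distrib]
      exact Finset.sum_congr rfl fun s' _ => by ring
    rw [hsplit, (hf u).2]
    have : (∑ s', M.P (Hist.last π) (f u) s') = 1 := hfe u
    rw [this, one_mul]

end Dev4
section Dev5
set_option linter.unusedSectionVars false

open Filter

variable {S A : Type*} [Fintype S] [Fintype A] (M : MDP S A)
variable {m : ℕ} (q : Fin m → ℝ) (T : Fin m → Set S) (I : Finset (Fin m)) (s0 : S)

/-- The increments of the expected weighted hitting indicators. -/
noncomputable def rincr (σ : Scheduler M) (u : ℕ) : ℝ :=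
  wsum M σ (gI q T I) (u+1) (s0, []) - wsum M σ (gI q T I) u (s0, [])

/-- The dominating sequence. -/
noncomputable def rbnd (σ : Scheduler M) (u : ℕ) : ℝ :=
  ∑ i ∈ I, |q i| * (wsum M σ (hitInd (T i)) (u+1) (s0, [])
    - wsum M σ (hitInd (T i)) u (s0, []))

lemma wsum_gI_eq (σ : Scheduler M) (t : ℕ) (π : Hist S A) :
    wsum M σ (gI q T I) t π = ∑ i ∈ I, q i * wsum M σ (hitInd (T i)) t π :=
  wsum_lin M σ I q (fun i => hitInd (T i)) t π

lemma abs_rincr_le (σ : Scheduler M) (u : ℕ) : |rincr M q T I s0 σ u| ≤ rbnd M q T I s0 σ u := by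
  unfold rincr rbnd
  rw [wsum_gI_eq, wsum_gI_eq, ← Finset.sum_sub_distrib]
  rw [Finset.sum_congr rfl (fun i (_ : i ∈ I) => (by ring :
    q i * wsum M σ (hitInd (T i)) (u+1) (s0, []) - q i * wsum M σ (hitInd (T i)) u (s0, [])
    = q i * (wsum M σ (hitInd (T i)) (u+1) (s0, []) - wsum M σ (hitInd (T i)) u (s0, []))))]
  refine le_trans (Finset.abs_sum_le_sum_abs _ _) (Finset.sum_le_sum fun i _ => ?_)
  rw [abs_mul]
  refine mul_le_mul_of_nonneg_left ?_ (abs_nonneg _)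
  rw [abs_of_nonneg (by
    have := wsum_hitInd_mono M σ (T i) ((s0, []) : Hist S A) (Nat.le_succ u)
    linarith)]

lemma rbnd_summable (σ : Scheduler M) : Summable (rbnd M q T I s0 σ) := by
  refine summable_sum fun i _ => Summable.mul_left _ ?_
  refine summable_of_sum_range_le (c := 1) (fun u => by
    have := wsum_hitInd_mono M σ (T i) ((s0, []) : Hist S A) (Nat.le_succ u)
    linarith) (fun t => ?_)
  rw [Finset.sum_range_sub (fun u => wsum M σ (hitInd (T i)) u ((s0, []) : Hist S A)) t]
  have h1 := wsum_hitInd_le_one M σ (T i) t ((s0, []) : Hist S A)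
  have h0 := wsum_hitInd_nonneg M σ (T i) 0 ((s0, []) : Hist S A)
  linarith

lemma rincr_summable (σ : Scheduler M) : Summable (rincr M q T I s0 σ) :=
  Summable.of_abs (Summable.of_nonneg_of_le (fun u => abs_nonneg _)
    (abs_rincr_le M q T I s0 σ) (rbnd_summable M q T I s0 σ))

lemma disc_rincr_summable (σ : Scheduler M) {γ : ℝ} (hγ0 : 0 ≤ γ) (hγ1 : γ ≤ 1) :
    Summable (fun u => γ^u * rincr M q T I s0 σ u) := by
  refine Summable.of_abs (Summable.of_nonneg_of_le (fun u => abs_nonneg _)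
    (fun u => ?_) (rbnd_summable M q T I s0 σ))
  rw [abs_mul, abs_of_nonneg (pow_nonneg hγ0 u)]
  calc γ^u * |rincr M q T I s0 σ u| ≤ 1 * |rincr M q T I s0 σ u| :=
        mul_le_mul_of_nonneg_right (pow_le_one₀ hγ0 hγ1) (abs_nonneg _)
    _ = |rincr M q T I s0 σ u| := one_mul _
    _ ≤ rbnd M q T I s0 σ u := abs_rincr_le M q T I s0 σ u

lemma rincr_hasSum (σ : Scheduler M) :
    HasSum (rincr M q T I s0 σ)
      ((∑ i ∈ I, q i * Pr M σ s0 (T i)) - gI q T I ((s0, []) : Hist S A)) := by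
  have hs := rincr_summable M q T I s0 σ
  have h1 : Tendsto (fun t => ∑ u ∈ Finset.range t, rincr M q T I s0 σ u)
      atTop (nhds (∑' u, rincr M q T I s0 σ u)) := hs.hasSum.tendsto_sum_nat
  have h2 : Tendsto (fun t => ∑ u ∈ Finset.range t, rincr M q T I s0 σ u)
      atTop (nhds ((∑ i ∈ I, q i * Pr M σ s0 (T i)) - gI q T I ((s0, []) : Hist S A))) := by
    have heq : ∀ t, ∑ u ∈ Finset.range t, rincr M q T I s0 σ u
        = wsum M σ (gI q T I) t (s0, []) - wsum M σ (gI q T I) 0 (s0, []) :=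
      fun t => Finset.sum_range_sub (fun u => wsum M σ (gI q T I) u ((s0, []) : Hist S A)) t
    rw [show (gI q T I ((s0, []) : Hist S A))
      = wsum M σ (gI q T I) 0 ((s0, []) : Hist S A) from rfl]
    refine Tendsto.congr (fun t => (heq t).symm) (Tendsto.sub_const ?_ _)
    have := fun i (_ : i ∈ I) => Tendsto.const_mul (q i) (Pr_tendsto M σ s0 (T i))
    have hsum := tendsto_finset_sum I this
    refine Tendsto.congr (fun t => ?_) hsum
    exact (wsum_gI_eq M q T I σ t _).symm
  have := tendsto_nhds_unique h1 h2
  rw [← this]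
  exact hs.hasSum

lemma disc_partial (σ : Scheduler M) (γ : ℝ) (t : ℕ) :
    ∑ u ∈ Finset.range t, γ^u * rincr M q T I s0 σ u
      = Ddisc M q T I γ σ t (s0, []) :=
  (Ddisc_eq M q T I γ σ t _).symm

/-- The discounted value of any scheduler is bounded by the fixed point, and the greedy
scheduler achieves at least the fixed point. -/
lemma discounted_opt (γ : ℝ) (hγ0 : 0 ≤ γ) (hγ1 : γ < 1) :
    ∃ f : S × Finset (Fin m) → A, ∀ σ : Scheduler M,
      (∑' u, γ^u * rincr M q T I s0 σ u)
        ≤ ∑' u, γ^u * rincr M q T I s0 (schedOf M T I f) u := by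
  obtain ⟨f, hf⟩ := exists_greedy M q T I γ hγ0 hγ1
  set W := Wfix M q T I γ hγ0 hγ1 with hWdef
  set C : ℝ := ∑ u : S × Finset (Fin m), |W u| with hCdef
  have hC : ∀ u, |W u| ≤ C :=
    fun u => Finset.single_le_sum (fun v _ => abs_nonneg (W v)) (Finset.mem_univ u)
  have hγC : Tendsto (fun t : ℕ => γ^t * C) atTop (nhds 0) := by
    have := (tendsto_pow_atTop_nhds_zero_of_lt_one hγ0 hγ1).mul_const C
    rwa [zero_mul] at this
  set u0 : S × Finset (Fin m) := (s0, Bof T I ((s0, []) : Hist S A)) with hu0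
  have hlast : (Hist.last ((s0, []) : Hist S A), Bof T I ((s0, []) : Hist S A)) = u0 := by
    rw [Hist.last_nil]
  refine ⟨f, fun σ => ?_⟩
  have hub : (∑' u, γ^u * rincr M q T I s0 σ u) ≤ W u0 := by
    refine le_of_tendsto_of_tendsto'
      ((disc_rincr_summable M q T I s0 σ hγ0 (le_of_lt hγ1)).hasSum.tendsto_sum_nat)
      (by simpa using tendsto_const_nhds.add hγC) (fun t => ?_)
    rw [disc_partial]
    have := Ddisc_le M q T I γ hγ0 W (Wfix_fixed M q T I γ hγ0 hγ1) C hC σ t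
      ((s0, []) : Hist S A)
    rwa [hlast] at this
  have hlb : W u0 ≤ ∑' u, γ^u * rincr M q T I s0 (schedOf M T I f) u := by
    refine le_of_tendsto_of_tendsto'
      (by simpa using tendsto_const_nhds.sub hγC)
      ((disc_rincr_summable M q T I s0 (schedOf M T I f) hγ0
        (le_of_lt hγ1)).hasSum.tendsto_sum_nat) (fun t => ?_)
    rw [disc_partial]
    have := le_Ddisc_greedy M q T I γ hγ0 W C hC f hf t ((s0, []) : Hist S A)
    rwa [hlast] at this
  linarith

/-- Attainment: there is a scheduler maximizing the weighted reachability sum. -/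
lemma exists_opt : ∃ σs : Scheduler M, ∀ σ : Scheduler M,
    (∑ i ∈ I, q i * Pr M σ s0 (T i)) ≤ ∑ i ∈ I, q i * Pr M σs s0 (T i) := by
  classical
  set γj : ℕ → ℝ := fun j => 1 - ((j:ℝ)+2)⁻¹ with hγjdef
  have hγj0 : ∀ j, 0 ≤ γj j := by
    intro j
    have hj0 : (0:ℝ) ≤ (j:ℝ) := Nat.cast_nonneg j
    have h2 : (1:ℝ) ≤ (j:ℝ)+2 := by linarith
    have := inv_le_one_of_one_le₀ h2
    simp only [hγjdef]
    linarith
  have hγj1 : ∀ j, γj j < 1 := by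
    intro j
    have : (0:ℝ) < ((j:ℝ)+2)⁻¹ := by positivity
    simp only [hγjdef]
    linarith
  have hγjtend : Tendsto γj atTop (nhds 1) := by
    have h1 : Tendsto (fun j : ℕ => ((j:ℝ)+2)) atTop atTop :=
      Filter.tendsto_atTop_add_const_right _ 2 tendsto_natCast_atTop_atTop
    have h2 : Tendsto (fun j : ℕ => ((j:ℝ)+2)⁻¹) atTop (nhds 0) :=
      h1.inv_tendsto_atTop
    have := tendsto_const_nhds.sub h2 (f := fun _ : ℕ => (1:ℝ))
    simpa using this
  choose f hf using fun j => discounted_opt M q T I s0 (γj j) (hγj0 j) (hγj1 j)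
  obtain ⟨fs, hfs⟩ := Finite.exists_infinite_fiber f
  have hfreq : ∃ᶠ j in atTop, f j = fs := by
    rw [Nat.frequently_atTop_iff_infinite]
    exact Set.infinite_coe_iff.1 hfs
  refine ⟨schedOf M T I fs, fun σ => ?_⟩
  -- Abel-type limits
  have hA : ∀ τ : Scheduler M, Tendsto (fun j => ∑' u, (γj j)^u * rincr M q T I s0 τ u)
      atTop (nhds (∑' u, rincr M q T I s0 τ u)) := by
    intro τ
    refine tendsto_tsum_of_dominated_convergence (rbnd_summable M q T I s0 τ)
      (fun u => ?_) (Filter.Eventually.of_forall fun j u => ?_)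
    · have := (hγjtend.pow u).mul_const (rincr M q T I s0 τ u)
      simpa using this
    · rw [Real.norm_eq_abs, abs_mul, abs_of_nonneg (pow_nonneg (hγj0 j) u)]
      calc (γj j)^u * |rincr M q T I s0 τ u| ≤ 1 * |rincr M q T I s0 τ u| :=
            mul_le_mul_of_nonneg_right (pow_le_one₀ (hγj0 j) (le_of_lt (hγj1 j)))
              (abs_nonneg _)
        _ = |rincr M q T I s0 τ u| := one_mul _
        _ ≤ rbnd M q T I s0 τ u := abs_rincr_le M q T I s0 τ u
  -- conclude: tsum rincr σ ≤ tsum rincr σs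
  have hkey : (∑' u, rincr M q T I s0 σ u)
      ≤ ∑' u, rincr M q T I s0 (schedOf M T I fs) u := by
    by_contra hcon
    push_neg at hcon
    set x := ∑' u, rincr M q T I s0 σ u
    set y := ∑' u, rincr M q T I s0 (schedOf M T I fs) u
    set z := (x + y) / 2
    have hyz : y < z := by simp only [z]; linarith
    have hzx : z < x := by simp only [z]; linarith
    have hev1 : ∀ᶠ j in atTop, (∑' u, (γj j)^u * rincr M q T I s0 (schedOf M T I fs) u) < z :=
      Filter.Tendsto.eventually_lt_const hyz (hA (schedOf M T I fs))
    have hev2 : ∀ᶠ j in atTop, z < ∑' u, (γj j)^u * rincr M q T I s0 σ u :=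
      Filter.Tendsto.eventually_const_lt hzx (hA σ)
    obtain ⟨j, hjf, hj1, hj2⟩ := (hfreq.and_eventually (hev1.and hev2)).exists
    have := hf j σ
    rw [hjf] at this
    linarith
  have h1 := (rincr_hasSum M q T I s0 σ).tsum_eq
  have h2 := (rincr_hasSum M q T I s0 (schedOf M T I fs)).tsum_eq
  rw [h1, h2] at hkey
  linarith

end Dev5
section Dev6
set_option linter.unusedSectionVars false

open Filter

variable {S A : Type*} [Fintype S] [Fintype A] (M : MDP S A)
variable {m n : ℕ} (q : Fin m → ℚ) (s : Fin m → S) (k : Fin m → Fin n) (T : Fin m → Set S)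

lemma combVal_eq_sum (σ : Scheduler M) (c : S × Fin n) :
    combVal M q s k T σ c
      = ∑ i ∈ Finset.univ.filter (fun i => (s i, k i) = c),
          (q i : ℝ) * Pr M σ c.1 (T i) := rfl

lemma exists_comb_opt : ∃ Φ : S × Fin n → Scheduler M,
    ∀ (c : S × Fin n) (σ : Scheduler M),
      combVal M q s k T σ c ≤ combVal M q s k T (Φ c) c := by
  have h : ∀ c : S × Fin n, ∃ σs : Scheduler M, ∀ σ : Scheduler M,
      combVal M q s k T σ c ≤ combVal M q s k T σs c := by
    intro c
    obtain ⟨σs, hσs⟩ := exists_opt M (fun i => (q i : ℝ)) T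
      (Finset.univ.filter (fun i => (s i, k i) = c)) c.1
    exact ⟨σs, fun σ => by rw [combVal_eq_sum, combVal_eq_sum]; exact hσs σ⟩
  choose Φ hΦ using h
  exact ⟨Φ, hΦ⟩

/-- Glue a family of schedulers, dispatching on the initial state. -/
noncomputable def glue (Φ : S × Fin n → Scheduler M) (j : Fin n) : Scheduler M where
  choice := fun π => (Φ (π.1, j)).choice π
  nonneg := fun π a => (Φ (π.1, j)).nonneg π a
  sum_one := fun π => (Φ (π.1, j)).sum_one π
  supp := fun π a h => (Φ (π.1, j)).supp π a h

lemma glue_Pr (Φ : S × Fin n → Scheduler M) (j : Fin n) (x : S) (T' : Set S) :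
    Pr M (glue M Φ j) x T' = Pr M (Φ (x, j)) x T' := by
  refine Pr_congr M T' (fun π' h => ?_)
  show (Φ (π'.1, j)).choice π' = _
  rw [h]

lemma sum_group (τ : S × Fin n → Scheduler M) :
    (∑ i, (q i : ℝ) * Pr M (τ (s i, k i)) (s i) (T i))
      = ∑ c ∈ combSet s k, combVal M q s k T (τ c) c := by
  classical
  have h1 : ∑ c ∈ combSet s k, combVal M q s k T (τ c) c
      = ∑ c : S × Fin n, combVal M q s k T (τ c) c := by
    refine Finset.sum_subset (Finset.subset_univ _) fun c _ hc => ?_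
    rw [combVal_eq_sum]
    refine Finset.sum_eq_zero fun i hi => ?_
    exfalso
    apply hc
    rw [Finset.mem_filter] at hi
    unfold combSet
    rw [← hi.2]
    exact Finset.mem_image_of_mem _ (Finset.mem_univ i)
  rw [h1]
  rw [← Finset.sum_fiberwise Finset.univ (fun i => (s i, k i))
    (fun i => (q i : ℝ) * Pr M (τ (s i, k i)) (s i) (T i))]
  refine Finset.sum_congr rfl fun c _ => ?_
  rw [combVal_eq_sum]
  refine Finset.sum_congr rfl fun i hi => ?_
  rw [Finset.mem_filter] at hi
  rw [← hi.2]

lemma vMax_attained : ∃ σf : Fin n → Scheduler M,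
    ((∑ i, (q i : ℝ) * Pr M (σf (k i)) (s i) (T i)) = vMax M q s k T) ∧
    ∀ σ : Fin n → Scheduler M,
      (∑ i, (q i : ℝ) * Pr M (σ (k i)) (s i) (T i)) ≤ vMax M q s k T := by
  obtain ⟨Φ, hΦ⟩ := exists_comb_opt M q s k T
  have hSup : ∀ c ∈ combSet s k,
      sSup {x : ℝ | ∃ σ : Scheduler M, x = combVal M q s k T σ c}
        = combVal M q s k T (Φ c) c := by
    intro c _
    refine le_antisymm ?_ ?_
    · refine csSup_le ⟨_, ⟨Φ c, rfl⟩⟩ ?_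
      rintro x ⟨σ, rfl⟩
      exact hΦ c σ
    · refine le_csSup ⟨combVal M q s k T (Φ c) c, ?_⟩ ⟨Φ c, rfl⟩
      rintro x ⟨σ, rfl⟩
      exact hΦ c σ
  have hvMax : vMax M q s k T = ∑ c ∈ combSet s k, combVal M q s k T (Φ c) c :=
    Finset.sum_congr rfl hSup
  refine ⟨glue M Φ, ?_, ?_⟩
  · have h1 : ∀ i, Pr M (glue M Φ (k i)) (s i) (T i)
        = Pr M (Φ (s i, k i)) (s i) (T i) := fun i => glue_Pr M Φ (k i) (s i) (T i)
    rw [Finset.sum_congr rfl fun i _ => by rw [h1 i]]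
    rw [sum_group M q s k T Φ, hvMax]
  · intro σ
    have h2 : (∑ i, (q i : ℝ) * Pr M (σ (k i)) (s i) (T i))
        = ∑ c ∈ combSet s k, combVal M q s k T (σ c.2) c :=
      sum_group M q s k T (fun c => σ c.2)
    rw [h2, hvMax]
    exact Finset.sum_le_sum fun c _ => hΦ c (σ c.2)

end Dev6
/-- For every rational `q₀`: (i) some schedulers achieve a weighted sum
`≥ q₀` iff `v^max ≥ q₀`, and (ii) some schedulers achieve a weighted sum `> q₀` iff
`v^max > q₀`. -/
theorem inequality_iff_vmax
    {S A : Type*} [Fintype S] [Fintype A] [Nonempty S] [Nonempty A]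
    (M : MDP S A) {m n : ℕ} (hn : 1 ≤ n) (hmn : n ≤ m)
    (q : Fin m → ℚ) (s : Fin m → S) (k : Fin m → Fin n)
    (hk : Function.Surjective k) (T : Fin m → Set S) (q₀ : ℚ) :
    ((∃ σ : Fin n → Scheduler M,
        (∑ i, (q i : ℝ) * Pr M (σ (k i)) (s i) (T i)) ≥ (q₀ : ℝ)) ↔
      vMax M q s k T ≥ (q₀ : ℝ)) ∧
    ((∃ σ : Fin n → Scheduler M,
        (∑ i, (q i : ℝ) * Pr M (σ (k i)) (s i) (T i)) > (q₀ : ℝ)) ↔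
      vMax M q s k T > (q₀ : ℝ)) := by
  obtain ⟨σf, hopt, hub⟩ := vMax_attained M q s k T
  constructor
  · constructor
    · rintro ⟨σ, hσ⟩
      exact le_trans hσ (hub σ)
    · intro h
      exact ⟨σf, by rw [ge_iff_le, hopt] at *; exact h⟩
  · constructor
    · rintro ⟨σ, hσ⟩
      exact lt_of_lt_of_le hσ (hub σ)
    · intro h
      exact ⟨σf, by rw [gt_iff_lt, hopt] at *; exact h⟩
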